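/- Let c be a transcendental real number and define c_n = n + c for n ∈ ℕ. Then the family (c_n)_{n∈ℕ} is linearly dependent over ℚ, but the family (1/c_n)_{n∈ℕ} is linearly independent over ℚ. -/

import Mathlib

open Polynomial

theorem stmt_4 (c : ℝ) (hc : Transcendental ℚ c) :
    ¬ LinearIndependent ℚ (fun n : ℕ => (n : ℝ) + c) ∧
      LinearIndependent ℚ (fun n : ℕ => ((n : ℝ) + c)⁻¹) := by
  have hc' : ∀ p : ℚ[X], Polynomial.aeval c p = 0 → p = 0 := transcendental_iff.mp hc
  have hne : ∀ n : ℕ, (n : ℝ) + c ≠ 0 := by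
    intro n h
    have h1 : Polynomial.aeval c (Polynomial.C (n : ℚ) + X) = 0 := by
      simpa using h
    have h2 := hc' _ h1
    have := congrArg (fun p => Polynomial.coeff p 1) h2
    simp at this
  constructor
  · intro h
    have key := linearIndependent_iff'.mp h ({0, 1, 2} : Finset ℕ)
      (fun n => if n = 0 then 1 else if n = 1 then -2 else 1) ?_ 0 (by simp)
    · norm_num at key
    · simp only [Finset.sum_insert, Finset.mem_insert, Finset.mem_singleton,
        Finset.sum_singleton, Rat.smul_def]
      norm_num
      ring
  · rw [linearIndependent_iff']
    intro s g hsum n hn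
    set P : ℚ[X] := ∑ k ∈ s, Polynomial.C (g k) * ∏ m ∈ s.erase k, (X + Polynomial.C (m : ℚ)) with hP
    have hPc : Polynomial.aeval c P = 0 := by
      have h1 : (Polynomial.aeval c P : ℝ) = ∑ k ∈ s, (g k : ℝ) * ∏ m ∈ s.erase k, (c + m) := by
        simp [hP, map_sum, map_mul, map_prod]
      have h2 : ∀ k ∈ s, (g k : ℝ) * ∏ m ∈ s.erase k, (c + m)
          = (g k • ((k : ℝ) + c)⁻¹) * ∏ m ∈ s, (c + m) := by
        intro k hk
        rw [← Finset.prod_erase_mul s _ hk, Rat.smul_def, add_comm (k : ℝ) c]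
        have hk' : (c : ℝ) + k ≠ 0 := by rw [add_comm]; exact hne k
        field_simp
      rw [h1, Finset.sum_congr rfl h2, ← Finset.sum_mul, hsum, zero_mul]
    have hP0 : P = 0 := hc' _ hPc
    have hev := congrArg (Polynomial.eval (-(n : ℚ))) hP0
    rw [hP] at hev
    simp only [Polynomial.eval_finset_sum, Polynomial.eval_mul, Polynomial.eval_C,
      Polynomial.eval_prod, Polynomial.eval_add, Polynomial.eval_X, Polynomial.eval_zero] at hev
    rw [Finset.sum_eq_single n] at hev
    · have hprod : ∏ m ∈ s.erase n, (-(n : ℚ) + m) ≠ 0 := by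
        apply Finset.prod_ne_zero_iff.mpr
        intro m hm
        have hmn : m ≠ n := Finset.ne_of_mem_erase hm
        intro h0
        apply hmn
        have : (m : ℚ) = n := by linarith
        exact_mod_cast this
      exact (mul_eq_zero.mp hev).resolve_right hprod
    · intro k hk hkn
      have : (n : ℕ) ∈ s.erase k := Finset.mem_erase.mpr ⟨fun h => hkn h.symm, hn⟩
      rw [Finset.prod_eq_zero this (by ring), mul_zero]
    · intro h; exact absurd hn h
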